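/- Under the intrinsic graph setup below, identify N with ℝ² via (η,t) ↦ η b₂ + t e₃. Let I and J be open intervals with I×J ⊂ B^N_{n₀,s} and let [a,b] ⊂ I. Let τ ∈ C¹([a,b],J) be a characteristic of the Burgers equation ∂_η φ₂ + det(C) ∂_t(φ₂²) = −(Y₂f₂∘Φ₂)/(Y₁f₂∘Φ₂), that is, τ̇(η) = 2 det(C) φ₂(η, τ(η)) for all η. Set γ(η) = η b₂ + τ(η) e₃. Then the composition f₁∘Φ₂∘γ is differentiable at every η ∈ [a,b] and (d/dη)(f₁∘Φ₂∘γ)(η) = −(1/Y₁f₂(Φ₂(γ(η)))) · det [[Y₁f₁(Φ₂(γ(η))), Y₂f₁(Φ₂(γ(η)))],[Y₁f₂(Φ₂(γ(η))), Y₂f₂(Φ₂(γ(η)))]]. -/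

import Mathlib

noncomputable section

open Set

/-- The first Heisenberg group as `ℝ³`. -/
abbrev Hei : Type := ℝ × ℝ × ℝ

/-- The Heisenberg group product:
`x · y = x + y + (x₁,₁ y₁,₂ − y₁,₁ x₁,₂) e₃`. -/
def hmul (x y : Hei) : Hei :=
  (x.1 + y.1, x.2.1 + y.2.1, x.2.2 + y.2.2 + (x.1 * y.2.1 - y.1 * x.2.1))

/-- The Heisenberg group inverse `x⁻¹ = -x`. -/
def hinv (x : Hei) : Hei := (-x.1, -x.2.1, -x.2.2)

/-- The intrinsic dilation `δ_r(x) = r x₁ + r² x₂`. -/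
def hdil (r : ℝ) (x : Hei) : Hei := (r * x.1, r * x.2.1, r ^ 2 * x.2.2)

/-- The homogeneous norm `‖x‖ = max {|x₁|, √|x₂|}`. -/
def hnorm (x : Hei) : ℝ :=
  max (Real.sqrt (x.1 ^ 2 + x.2.1 ^ 2)) (Real.sqrt |x.2.2|)

/-- The homogeneous distance `d(x,y) = ‖x⁻¹ · y‖`. -/
def hdist (x y : Hei) : ℝ := hnorm (hmul (hinv x) y)

/-- `f` is (Pansu) differentiable at `x` with differential `L`: `L` is linear (bundled),
homogeneous with respect to the intrinsic dilations, and
`f y = f x + L (x⁻¹ · y) + o (d (x, y))` as `d (x, y) → 0`. -/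
def IsHDerivAt {F : Type*} [NormedAddCommGroup F] [NormedSpace ℝ F]
    (f : Hei → F) (L : Hei →L[ℝ] F) (x : Hei) : Prop :=
  (∀ r : ℝ, 0 < r → ∀ z : Hei, L (hdil r z) = r • L z) ∧
  ∀ ε : ℝ, 0 < ε → ∃ δ : ℝ, 0 < δ ∧ ∀ y : Hei, hdist x y ≤ δ →
    ‖f y - f x - L (hmul (hinv x) y)‖ ≤ ε * hdist x y

/-- `f ∈ C¹_H(Ω, F)` with horizontal gradient `gradf`: `f` is differentiable at every point
of `Ω` with differential `gradf x`, depending continuously on `x ∈ Ω`. -/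
def C1H {F : Type*} [NormedAddCommGroup F] [NormedSpace ℝ F]
    (Ω : Set Hei) (f : Hei → F) (gradf : Hei → Hei →L[ℝ] F) : Prop :=
  (∀ x ∈ Ω, IsHDerivAt f (gradf x) x) ∧ ContinuousOn gradf Ω

/-- The horizontal unit vector `b₁ = c₁¹ e₁ + c₁² e₂`. -/
def b1v (c11 c12 : ℝ) : Hei := (c11, c12, 0)

/-- The horizontal vector `b₂ = c₂¹ e₁ + c₂² e₂`. -/
def b2v (c21 c22 : ℝ) : Hei := (c21, c22, 0)

/-- The embedding of the vertical subgroup `N = span {b₂, e₃}` in `ℍ`,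
`(η, t) ↦ η b₂ + t e₃`. -/
def Nemb (c21 c22 : ℝ) (p : ℝ × ℝ) : Hei := (p.1 * c21, p.1 * c22, p.2)

/-- The intrinsic graph mapping `Φ₂ (n) = n · (φ₂ (n) b₁)`, in the coordinates `(η, t)`
of `N`. -/
def intrinsicGraph (c11 c12 c21 c22 : ℝ) (φ₂ : ℝ × ℝ → ℝ) (p : ℝ × ℝ) : Hei :=
  hmul (Nemb c21 c22 p) (φ₂ p • b1v c11 c12)

private lemma sqrt_add_le_my (x y : ℝ) (hx : 0 ≤ x) (hy : 0 ≤ y) :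
    Real.sqrt (x + y) ≤ Real.sqrt x + Real.sqrt y := by
  have h1 := Real.sq_sqrt hx
  have h2 := Real.sq_sqrt hy
  have h3 := Real.sqrt_nonneg x
  have h4 := Real.sqrt_nonneg y
  calc Real.sqrt (x + y) ≤ Real.sqrt ((Real.sqrt x + Real.sqrt y) ^ 2) :=
        Real.sqrt_le_sqrt (by nlinarith)
    _ = Real.sqrt x + Real.sqrt y := Real.sqrt_sq (by positivity)

private lemma sqrt_mul_le_half_add (x y : ℝ) (hx : 0 ≤ x) (hy : 0 ≤ y) :
    Real.sqrt (x * y) ≤ (x + y) / 2 := by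
  calc Real.sqrt (x * y) ≤ Real.sqrt (((x + y) / 2) ^ 2) :=
        Real.sqrt_le_sqrt (by nlinarith [sq_nonneg (x - y)])
    _ = (x + y) / 2 := Real.sqrt_sq (by positivity)

private lemma L_e3_zero (L : Hei →L[ℝ] ℝ)
    (h : ∀ r : ℝ, 0 < r → ∀ z : Hei, L (hdil r z) = r • L z) :
    L ((0 : ℝ), (0 : ℝ), (1 : ℝ)) = 0 := by
  have h2 := h 2 two_pos ((0 : ℝ), (0 : ℝ), (1 : ℝ))
  have h3 : hdil 2 ((0 : ℝ), (0 : ℝ), (1 : ℝ)) = (4 : ℝ) • ((0 : ℝ), (0 : ℝ), (1 : ℝ)) := by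
    simp [hdil, Prod.ext_iff]
    norm_num
  rw [h3, map_smul] at h2
  simp only [smul_eq_mul] at h2
  linarith

private lemma graph_diff (c11 c12 c21 c22 : ℝ) (φ₂ : ℝ × ℝ → ℝ) (q r : ℝ × ℝ) :
    hmul (hinv (intrinsicGraph c11 c12 c21 c22 φ₂ q)) (intrinsicGraph c11 c12 c21 c22 φ₂ r) =
      ((r.1 - q.1) * c21 + (φ₂ r - φ₂ q) * c11,
       (r.1 - q.1) * c22 + (φ₂ r - φ₂ q) * c12,
       r.2 - q.2 - (c11 * c22 - c12 * c21) * (φ₂ q + φ₂ r) * (r.1 - q.1)) := by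
  simp only [intrinsicGraph, Nemb, b1v, hmul, hinv, Prod.smul_mk, smul_eq_mul, Prod.mk.injEq]
  refine ⟨by ring, by ring, by ring⟩

private lemma L_apply_mix (L : Hei →L[ℝ] ℝ) (c11 c12 c21 c22 : ℝ)
    (hz : L ((0 : ℝ), (0 : ℝ), (1 : ℝ)) = 0) (s t v : ℝ) :
    L (s * c21 + t * c11, s * c22 + t * c12, v)
      = s * L (b2v c21 c22) + t * L (b1v c11 c12) := by
  have hdecomp : ((s * c21 + t * c11, s * c22 + t * c12, v) : Hei)
      = s • b2v c21 c22 + t • b1v c11 c12 + v • ((0 : ℝ), (0 : ℝ), (1 : ℝ)) := by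
    simp only [b1v, b2v, Prod.smul_mk, smul_eq_mul, Prod.mk_add_mk, Prod.mk.injEq]
    refine ⟨by ring, by ring, by ring⟩
  rw [hdecomp, map_add, map_add, map_smul, map_smul, map_smul, hz]
  simp [smul_eq_mul]

set_option maxHeartbeats 2000000 in
private lemma key_lemma (f₁ f₂ : Hei → ℝ) (L₁ L₂ : Hei →L[ℝ] ℝ)
    (c11 c12 c21 c22 detC : ℝ)
    (hb1 : c11 ^ 2 + c12 ^ 2 = 1) (hb2 : c21 ^ 2 + c22 ^ 2 = 1)
    (a b η : ℝ) (hη : η ∈ Icc a b)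
    (τ φc : ℝ → ℝ) (X : ℝ → Hei)
    (hchar : ∀ u ∈ Icc a b, HasDerivWithinAt τ (2 * detC * φc u) (Icc a b) u)
    (hφcont : ContinuousOn φc (Icc a b))
    (hXw : ∀ u, hmul (hinv (X η)) (X u) =
      ((u - η) * c21 + (φc u - φc η) * c11,
        (u - η) * c22 + (φc u - φc η) * c12,
        τ u - τ η - detC * (φc η + φc u) * (u - η)))
    (hlevel : ∀ u ∈ Icc a b, f₂ (X u) = f₂ (X η))
    (hrem1 : ∀ ε : ℝ, 0 < ε → ∃ δ : ℝ, 0 < δ ∧ ∀ y : Hei, hdist (X η) y ≤ δ →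
      ‖f₁ y - f₁ (X η) - L₁ (hmul (hinv (X η)) y)‖ ≤ ε * hdist (X η) y)
    (hrem2 : ∀ ε : ℝ, 0 < ε → ∃ δ : ℝ, 0 < δ ∧ ∀ y : Hei, hdist (X η) y ≤ δ →
      ‖f₂ y - f₂ (X η) - L₂ (hmul (hinv (X η)) y)‖ ≤ ε * hdist (X η) y)
    (hhom1 : ∀ r : ℝ, 0 < r → ∀ z : Hei, L₁ (hdil r z) = r • L₁ z)
    (hhom2 : ∀ r : ℝ, 0 < r → ∀ z : Hei, L₂ (hdil r z) = r • L₂ z)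
    (hY12 : L₂ (b1v c11 c12) ≠ 0) :
    HasDerivWithinAt (fun y : ℝ => f₁ (X y))
      (-(1 / L₂ (b1v c11 c12)) * (L₁ (b1v c11 c12) * L₂ (b2v c21 c22)
          - L₁ (b2v c21 c22) * L₂ (b1v c11 c12))) (Icc a b) η := by
  set Y11 := L₁ (b1v c11 c12) with hY11d
  set Y21 := L₁ (b2v c21 c22) with hY21d
  set Y12 := L₂ (b1v c11 c12) with hY12d
  set Y22 := L₂ (b2v c21 c22) with hY22d
  set Y : ℝ := |Y12| with hYd
  have hYpos : 0 < Y := abs_pos.2 hY12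
  set C : ℝ := |Y22| / Y with hCd
  have hC0 : 0 ≤ C := div_nonneg (abs_nonneg _) hYpos.le
  set K : ℝ := |detC| with hKd
  have hK0 : 0 ≤ K := abs_nonneg _
  set A : ℝ := 2 * C + 2 * Real.sqrt (3 * K * C) + 5 with hAd
  have hA0 : 0 < A := by
    have := Real.sqrt_nonneg (3 * K * C); rw [hAd]; linarith
  -- vertical annihilation / values on difference
  have hz1 : L₁ ((0 : ℝ), (0 : ℝ), (1 : ℝ)) = 0 := L_e3_zero L₁ hhom1
  have hz2 : L₂ ((0 : ℝ), (0 : ℝ), (1 : ℝ)) = 0 := L_e3_zero L₂ hhom2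
  have hL1 : ∀ u, L₁ (hmul (hinv (X η)) (X u))
      = (u - η) * Y21 + (φc u - φc η) * Y11 := by
    intro u; rw [hXw u]; exact L_apply_mix L₁ c11 c12 c21 c22 hz1 _ _ _
  have hL2 : ∀ u, L₂ (hmul (hinv (X η)) (X u))
      = (u - η) * Y22 + (φc u - φc η) * Y12 := by
    intro u; rw [hXw u]; exact L_apply_mix L₂ c11 c12 c21 c22 hz2 _ _ _
  -- the distance function along the curve
  set d : ℝ → ℝ := fun u => hdist (X η) (X u) with hdd
  have hdeq : ∀ u, d u = max
      (Real.sqrt (((u - η) * c21 + (φc u - φc η) * c11) ^ 2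
        + ((u - η) * c22 + (φc u - φc η) * c12) ^ 2))
      (Real.sqrt |τ u - τ η - detC * (φc η + φc u) * (u - η)|) := by
    intro u
    show hnorm (hmul (hinv (X η)) (X u)) = _
    rw [hXw u]
    rfl
  have hd0 : ∀ u, 0 ≤ d u := by
    intro u; rw [hdeq u]; exact le_trans (Real.sqrt_nonneg _) (le_max_left _ _)
  -- horizontal estimate
  have hip : |c11 * c21 + c12 * c22| ≤ 1 := by
    apply abs_le_one_iff_mul_self_le_one.2
    nlinarith [sq_nonneg (c11 * c22 - c12 * c21)]
  have hhle : ∀ s t : ℝ,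
      Real.sqrt ((s * c21 + t * c11) ^ 2 + (s * c22 + t * c12) ^ 2) ≤ |s| + |t| := by
    intro s t
    have h1 : s * t * (c11 * c21 + c12 * c22) ≤ |s| * |t| := by
      calc s * t * (c11 * c21 + c12 * c22) ≤ |s * t * (c11 * c21 + c12 * c22)| := le_abs_self _
        _ = |s| * |t| * |c11 * c21 + c12 * c22| := by rw [abs_mul, abs_mul]
        _ ≤ |s| * |t| * 1 := mul_le_mul_of_nonneg_left hip (by positivity)
        _ = |s| * |t| := mul_one _
    have e1 : (s * c21 + t * c11) ^ 2 + (s * c22 + t * c12) ^ 2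
        = s ^ 2 + t ^ 2 + 2 * (s * t * (c11 * c21 + c12 * c22)) := by
      linear_combination s ^ 2 * hb2 + t ^ 2 * hb1
    calc Real.sqrt ((s * c21 + t * c11) ^ 2 + (s * c22 + t * c12) ^ 2)
        ≤ Real.sqrt ((|s| + |t|) ^ 2) := by
          apply Real.sqrt_le_sqrt
          rw [e1]
          nlinarith [h1, sq_abs s, sq_abs t]
      _ = |s| + |t| := Real.sqrt_sq (by positivity)
  have hdle : ∀ u, d u ≤ max (|u - η| + |φc u - φc η|)
      (Real.sqrt |τ u - τ η - detC * (φc η + φc u) * (u - η)|) := by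
    intro u; rw [hdeq u]; exact max_le_max (hhle _ _) le_rfl
  -- smallness of d near η
  have hτconW : ContinuousWithinAt τ (Icc a b) η := (hchar η hη).continuousWithinAt
  have hφconW : ContinuousWithinAt φc (Icc a b) η := hφcont η hη
  have hbcont : ContinuousWithinAt (fun u => max (|u - η| + |φc u - φc η|)
      (Real.sqrt |τ u - τ η - detC * (φc η + φc u) * (u - η)|)) (Icc a b) η := by
    apply ContinuousWithinAt.sup'
    · exact ((continuousWithinAt_id.sub continuousWithinAt_const).abs).add
        ((hφconW.sub continuousWithinAt_const).abs)
    · apply Real.continuous_sqrt.continuousAt.comp_continuousWithinAt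
      apply ContinuousWithinAt.abs
      exact (hτconW.sub continuousWithinAt_const).sub
        (((continuousWithinAt_const.mul (continuousWithinAt_const.add hφconW)).mul
          (continuousWithinAt_id.sub continuousWithinAt_const)))
  have hbη : max (|η - η| + |φc η - φc η|)
      (Real.sqrt |τ η - τ η - detC * (φc η + φc η) * (η - η)|) = 0 := by
    simp
  have hsmall : ∀ δ : ℝ, 0 < δ → ∃ t : ℝ, 0 < t ∧
      ∀ u ∈ Icc a b, |u - η| ≤ t → d u ≤ δ := by
    intro δ hδ
    obtain ⟨t, ht, hb'⟩ := Metric.continuousWithinAt_iff.1 hbcont δ hδ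
    refine ⟨t / 2, by linarith, fun u hu hut => ?_⟩
    have h1 : dist u η < t := by rw [Real.dist_eq]; linarith
    have h2 := hb' hu h1
    rw [Real.dist_eq, hbη, sub_zero] at h2
    have h3 := hdle u
    have h4 := le_abs_self (max (|u - η| + |φc u - φc η|)
      (Real.sqrt |τ u - τ η - detC * (φc η + φc u) * (u - η)|))
    linarith
  -- fixed small parameter
  set e : ℝ := min (1 / 4) (1 / (12 * (K + 1))) with hed
  have he0 : 0 < e := lt_min (by norm_num) (by positivity)
  have heq4 : e ≤ 1 / 4 := min_le_left _ _
  have h3Ke : 3 * K * e ≤ 1 / 4 := by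
    have h1 : e ≤ 1 / (12 * (K + 1)) := min_le_right _ _
    have h2 : 3 * K * e ≤ 3 * K * (1 / (12 * (K + 1))) :=
      mul_le_mul_of_nonneg_left h1 (by positivity)
    have h3 : 3 * K * (1 / (12 * (K + 1))) ≤ 1 / 4 := by
      rw [mul_one_div, div_le_div_iff₀ (by positivity) (by norm_num)]
      linarith
    linarith
  have hsq3Ke : Real.sqrt (3 * K * e) ≤ 1 / 2 := by
    calc Real.sqrt (3 * K * e) ≤ Real.sqrt (1 / 4) := Real.sqrt_le_sqrt h3Ke
      _ = 1 / 2 := by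
        rw [show (1 / 4 : ℝ) = (1 / 2) ^ 2 by norm_num, Real.sqrt_sq (by norm_num)]
  have hε₀ : 0 < e * Y := mul_pos he0 hYpos
  obtain ⟨δ₂, hδ₂, hremε₀⟩ := hrem2 (e * Y) hε₀
  obtain ⟨t₁, ht₁, hsm₁⟩ := hsmall δ₂ hδ₂
  -- linear bound on d
  have dlin : ∀ u ∈ Icc a b, |u - η| ≤ t₁ → d u ≤ A * |u - η| := by
    intro u hu hut
    set t : ℝ := |u - η| with htd
    have ht0 : 0 ≤ t := abs_nonneg _
    set S : Set ℝ := Icc a b ∩ Icc (η - t) (η + t) with hSd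
    have hSsub : S ⊆ Icc a b := inter_subset_left
    have hSsmall : ∀ v ∈ S, |v - η| ≤ t := by
      rintro v ⟨-, hv⟩
      rw [abs_le]; exact ⟨by linarith [hv.1], by linarith [hv.2]⟩
    have hηS : η ∈ S := ⟨hη, by constructor <;> linarith⟩
    have huS : u ∈ S := by
      refine ⟨hu, ?_⟩
      have h := abs_le.1 (le_of_eq htd.symm)
      exact ⟨by linarith [h.1], by linarith [h.2]⟩
    have hScpt : IsCompact S := isCompact_Icc.inter_right isClosed_Icc
    have hτcont : ContinuousOn τ (Icc a b) := fun v hv => (hchar v hv).continuousWithinAt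
    have hdcont : ContinuousOn d (Icc a b) := by
      apply ContinuousOn.congr (f := fun u => max
        (Real.sqrt (((u - η) * c21 + (φc u - φc η) * c11) ^ 2
          + ((u - η) * c22 + (φc u - φc η) * c12) ^ 2))
        (Real.sqrt |τ u - τ η - detC * (φc η + φc u) * (u - η)|))
      · apply ContinuousOn.sup'
        · apply Real.continuous_sqrt.comp_continuousOn
          apply ContinuousOn.add
          · apply ContinuousOn.pow
            exact ((continuousOn_id.sub continuousOn_const).mul continuousOn_const).add
              (((hφcont.sub continuousOn_const)).mul continuousOn_const)
          · apply ContinuousOn.pow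
            exact ((continuousOn_id.sub continuousOn_const).mul continuousOn_const).add
              (((hφcont.sub continuousOn_const)).mul continuousOn_const)
        · apply Real.continuous_sqrt.comp_continuousOn
          apply ContinuousOn.abs
          exact (hτcont.sub continuousOn_const).sub
            ((continuousOn_const.mul (continuousOn_const.add hφcont)).mul
              (continuousOn_id.sub continuousOn_const))
      · intro v hv; exact hdeq v
    set F : ℝ := sSup ((fun v => |φc v - φc η|) '' S) with hFd
    set D : ℝ := sSup (d '' S) with hDd
    have hφS : ContinuousOn (fun v => |φc v - φc η|) S :=
      ((hφcont.mono hSsub).sub continuousOn_const).abs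
    have hFbdd : BddAbove ((fun v => |φc v - φc η|) '' S) :=
      (hScpt.image_of_continuousOn hφS).bddAbove
    have hDbdd : BddAbove (d '' S) :=
      (hScpt.image_of_continuousOn (hdcont.mono hSsub)).bddAbove
    have hD0 : 0 ≤ D := le_trans (hd0 η) (le_csSup hDbdd ⟨η, hηS, rfl⟩)
    have hF0 : 0 ≤ F := le_trans (abs_nonneg _) (le_csSup hFbdd ⟨η, hηS, rfl⟩)
    have hdvD : ∀ v ∈ S, d v ≤ D := fun v hv => le_csSup hDbdd ⟨v, hv, rfl⟩
    have hFv : ∀ v ∈ S, |φc v - φc η| ≤ F := fun v hv => le_csSup hFbdd ⟨v, hv, rfl⟩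
    have hdδ : ∀ v ∈ S, d v ≤ δ₂ :=
      fun v hv => hsm₁ v (hSsub hv) (le_trans (hSsmall v hv) hut)
    -- F bound from the level-set equation
    have hφv : ∀ v ∈ S, |φc v - φc η| ≤ C * t + e * D := by
      intro v hv
      have hr := hremε₀ (X v) (hdδ v hv)
      rw [hlevel v (hSsub hv), sub_self, zero_sub, norm_neg, Real.norm_eq_abs, hL2 v] at hr
      have htri : |(φc v - φc η) * Y12| ≤ |(v - η) * Y22 + (φc v - φc η) * Y12|
          + |(v - η) * Y22| := by
        calc |(φc v - φc η) * Y12|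
            = |((v - η) * Y22 + (φc v - φc η) * Y12) + (-((v - η) * Y22))| := by ring_nf
          _ ≤ _ := by rw [← abs_neg ((v - η) * Y22)] ; exact abs_add_le _ _
      have h2 : |(φc v - φc η)| * Y ≤ |Y22| * t + (e * Y) * D := by
        have h3 : |(v - η) * Y22| ≤ |Y22| * t := by
          rw [abs_mul]
          calc |v - η| * |Y22| ≤ t * |Y22| :=
                mul_le_mul_of_nonneg_right (hSsmall v hv) (abs_nonneg _)
            _ = |Y22| * t := mul_comm _ _
        have h4 : |(v - η) * Y22 + (φc v - φc η) * Y12| ≤ (e * Y) * d v := hr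
        have h5 : (e * Y) * d v ≤ (e * Y) * D :=
          mul_le_mul_of_nonneg_left (hdvD v hv) hε₀.le
        have h6 : |(φc v - φc η) * Y12| = |φc v - φc η| * Y := by rw [abs_mul]
        linarith [htri]
      have h7 : C * t + e * D = (|Y22| * t + (e * Y) * D) / Y := by
        rw [hCd]; field_simp
      rw [h7, le_div_iff₀ hYpos]
      linarith [h2]
    have hF : F ≤ C * t + e * D :=
      Real.sSup_le (by rintro x ⟨v, hv, rfl⟩; exact hφv v hv) (by positivity)
    -- vertical bound via MVT along the characteristic
    have hconv : Convex ℝ S := (convex_Icc a b).inter (convex_Icc _ _)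
    have hVert : ∀ v ∈ S,
        |τ v - τ η - detC * (φc η + φc v) * (v - η)| ≤ 3 * K * F * t := by
      intro v hv
      have hder : ∀ w ∈ S, HasDerivWithinAt (fun z => τ z - 2 * detC * φc η * z)
          (2 * detC * φc w - 2 * detC * φc η) S w := by
        intro w hw
        have h1 := (hchar w (hSsub hw)).mono hSsub
        have h2 : HasDerivWithinAt (fun z => 2 * detC * φc η * z)
            (2 * detC * φc η) S w := by
          simpa using (hasDerivWithinAt_id w S).const_mul (2 * detC * φc η)
        exact h1.sub h2
      have hbound : ∀ w ∈ S, ‖2 * detC * φc w - 2 * detC * φc η‖ ≤ 2 * K * F := by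
        intro w hw
        rw [Real.norm_eq_abs,
          show 2 * detC * φc w - 2 * detC * φc η = 2 * detC * (φc w - φc η) by ring,
          abs_mul, abs_mul, abs_two]
        calc 2 * |detC| * |φc w - φc η| ≤ 2 * |detC| * F :=
              mul_le_mul_of_nonneg_left (hFv w hw) (by positivity)
          _ = 2 * K * F := by rw [hKd]
      have hmvt := hconv.norm_image_sub_le_of_norm_hasDerivWithin_le hder hbound hηS hv
      rw [Real.norm_eq_abs, Real.norm_eq_abs] at hmvt
      have h2 : |τ v - τ η - 2 * detC * φc η * (v - η)| ≤ 2 * K * F * t := by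
        have he : τ v - τ η - 2 * detC * φc η * (v - η)
            = (τ v - 2 * detC * φc η * v) - (τ η - 2 * detC * φc η * η) := by ring
        rw [he]
        calc |(τ v - 2 * detC * φc η * v) - (τ η - 2 * detC * φc η * η)|
            ≤ 2 * K * F * |v - η| := hmvt
          _ ≤ 2 * K * F * t := mul_le_mul_of_nonneg_left (hSsmall v hv) (by positivity)
      have h3 : |detC * (φc η - φc v) * (v - η)| ≤ K * F * t := by
        rw [abs_mul, abs_mul]
        have h4 : |φc η - φc v| ≤ F := by rw [abs_sub_comm]; exact hFv v hv
        calc |detC| * |φc η - φc v| * |v - η| ≤ |detC| * F * |v - η| :=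
              mul_le_mul_of_nonneg_right (mul_le_mul_of_nonneg_left h4 (abs_nonneg _))
                (abs_nonneg _)
          _ ≤ |detC| * F * t := mul_le_mul_of_nonneg_left (hSsmall v hv) (by positivity)
          _ = K * F * t := by rw [hKd]
      have he2 : τ v - τ η - detC * (φc η + φc v) * (v - η)
          = (τ v - τ η - 2 * detC * φc η * (v - η)) + detC * (φc η - φc v) * (v - η) := by
        ring
      rw [he2]
      calc |(τ v - τ η - 2 * detC * φc η * (v - η)) + detC * (φc η - φc v) * (v - η)|
          ≤ |τ v - τ η - 2 * detC * φc η * (v - η)| + |detC * (φc η - φc v) * (v - η)| :=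
            abs_add_le _ _
        _ ≤ 2 * K * F * t + K * F * t := add_le_add h2 h3
        _ = 3 * K * F * t := by ring
    -- the big sup inequality
    have hDle : D ≤ t + (C * t + e * D) + Real.sqrt (3 * K * t * (C * t + e * D)) := by
      apply Real.sSup_le ?_ (by positivity)
      rintro x ⟨v, hv, rfl⟩
      refine le_trans (hdle v) (max_le ?_ ?_)
      · have h1 := hφv v hv
        have h2 := hSsmall v hv
        have h3 := Real.sqrt_nonneg (3 * K * t * (C * t + e * D))
        linarith
      · have h2 := hVert v hv
        have h3 : Real.sqrt |τ v - τ η - detC * (φc η + φc v) * (v - η)|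
            ≤ Real.sqrt (3 * K * F * t) := Real.sqrt_le_sqrt h2
        have h4 : 3 * K * F * t ≤ 3 * K * t * (C * t + e * D) := by
          have h5 : F ≤ C * t + e * D := hF
          have h6 : 3 * K * t * F ≤ 3 * K * t * (C * t + e * D) :=
            mul_le_mul_of_nonneg_left h5 (by positivity)
          calc 3 * K * F * t = 3 * K * t * F := by ring
            _ ≤ 3 * K * t * (C * t + e * D) := h6
        have h6 := Real.sqrt_le_sqrt h4
        have h7 : (0 : ℝ) ≤ t + (C * t + e * D) := by positivity
        linarith [le_trans h3 h6]
    -- solve the inequality for D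
    have hsplit : Real.sqrt (3 * K * t * (C * t + e * D))
        ≤ Real.sqrt (3 * K * C) * t + (t + D) / 4 := by
      have e1 : 3 * K * t * (C * t + e * D) = (3 * K * C) * t ^ 2 + (3 * K * e) * (t * D) := by
        ring
      rw [e1]
      calc Real.sqrt ((3 * K * C) * t ^ 2 + (3 * K * e) * (t * D))
          ≤ Real.sqrt ((3 * K * C) * t ^ 2) + Real.sqrt ((3 * K * e) * (t * D)) :=
            sqrt_add_le_my _ _ (by positivity) (by positivity)
        _ = Real.sqrt (3 * K * C) * Real.sqrt (t ^ 2)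
            + Real.sqrt (3 * K * e) * Real.sqrt (t * D) := by
            rw [Real.sqrt_mul (show (0:ℝ) ≤ 3 * K * C by positivity) (t ^ 2),
              Real.sqrt_mul (show (0:ℝ) ≤ 3 * K * e by positivity) (t * D)]
        _ ≤ Real.sqrt (3 * K * C) * t + (1 / 2) * ((t + D) / 2) := by
            apply add_le_add
            · exact le_of_eq (by rw [Real.sqrt_sq ht0])
            · exact mul_le_mul hsq3Ke (sqrt_mul_le_half_add t D ht0 hD0)
                (Real.sqrt_nonneg _) (by norm_num)
        _ ≤ Real.sqrt (3 * K * C) * t + (t + D) / 4 := by linarith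
    have hDA : D ≤ A * t := by
      have h6 : D ≤ t + C * t + e * D + (Real.sqrt (3 * K * C) * t + (t + D) / 4) := by
        linarith [hDle, hsplit]
      have h7 : e * D ≤ (1 / 4) * D := mul_le_mul_of_nonneg_right heq4 hD0
      have h8 : A * t = 2 * (C * t) + 2 * (Real.sqrt (3 * K * C) * t) + 5 * t := by
        rw [hAd]; ring
      rw [h8]
      linarith
    exact le_trans (hdvD u huS) hDA
  -- final assembly
  rw [hasDerivWithinAt_iff_isLittleO, Asymptotics.isLittleO_iff]
  intro c hc
  set M : ℝ := |Y11| / Y + 1 with hMd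
  have hM1 : (1 : ℝ) ≤ M := le_add_of_nonneg_left (div_nonneg (abs_nonneg _) hYpos.le)
  have hM0 : (0 : ℝ) < M := lt_of_lt_of_le one_pos hM1
  have hMA : (0 : ℝ) < M * A + 1 := by positivity
  set ε : ℝ := c / (M * A + 1) with hεd
  have hε : 0 < ε := div_pos hc hMA
  obtain ⟨δa, hδa, hra⟩ := hrem1 ε hε
  obtain ⟨δb, hδb, hrb⟩ := hrem2 ε hε
  obtain ⟨t₂, ht₂, hsm₂⟩ := hsmall (min δa δb) (lt_min hδa hδb)
  have hev1 : ∀ᶠ u in nhdsWithin η (Icc a b), u ∈ Icc a b := eventually_mem_nhdsWithin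
  have hev2 : ∀ᶠ u in nhdsWithin η (Icc a b), |u - η| ≤ min t₁ t₂ := by
    have h : ∀ᶠ u in nhds η, |u - η| ≤ min t₁ t₂ := by
      rw [Metric.eventually_nhds_iff]
      exact ⟨min t₁ t₂, lt_min ht₁ ht₂, fun u hu => by
        rw [Real.dist_eq] at hu; linarith⟩
    exact h.filter_mono nhdsWithin_le_nhds
  filter_upwards [hev1, hev2] with u hu hut
  have hu1 : |u - η| ≤ t₁ := le_trans hut (min_le_left _ _)
  have hu2 : |u - η| ≤ t₂ := le_trans hut (min_le_right _ _)
  have hdu : d u ≤ min δa δb := hsm₂ u hu hu2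
  have hdA : d u ≤ A * |u - η| := dlin u hu hu1
  have hr1 : |f₁ (X u) - f₁ (X η) - ((u - η) * Y21 + (φc u - φc η) * Y11)| ≤ ε * d u := by
    have h := hra (X u) (le_trans hdu (min_le_left _ _))
    rwa [Real.norm_eq_abs, hL1 u] at h
  have hr2 : |(u - η) * Y22 + (φc u - φc η) * Y12| ≤ ε * d u := by
    have h := hrb (X u) (le_trans hdu (min_le_right _ _))
    rwa [hlevel u hu, sub_self, zero_sub, norm_neg, Real.norm_eq_abs, hL2 u] at h
  rw [Real.norm_eq_abs, Real.norm_eq_abs, smul_eq_mul]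
  have hiden : f₁ (X u) - f₁ (X η) - (u - η) * (-(1 / Y12) * (Y11 * Y22 - Y21 * Y12))
      = (f₁ (X u) - f₁ (X η) - ((u - η) * Y21 + (φc u - φc η) * Y11))
        + (Y11 / Y12) * ((u - η) * Y22 + (φc u - φc η) * Y12) := by
    field_simp
    ring
  rw [hiden]
  have habs2 : |(Y11 / Y12) * ((u - η) * Y22 + (φc u - φc η) * Y12)|
      ≤ (|Y11| / Y) * (ε * d u) := by
    rw [abs_mul, abs_div, hYd]
    exact mul_le_mul_of_nonneg_left hr2 (by positivity)
  have hMAε : M * A * ε ≤ c := by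
    have h9 : M * A / (M * A + 1) ≤ 1 := (div_le_one hMA).2 (by linarith)
    have h10 : M * A * ε = c * (M * A / (M * A + 1)) := by rw [hεd]; ring
    calc M * A * ε = c * (M * A / (M * A + 1)) := h10
      _ ≤ c * 1 := mul_le_mul_of_nonneg_left h9 hc.le
      _ = c := mul_one c
  calc |(f₁ (X u) - f₁ (X η) - ((u - η) * Y21 + (φc u - φc η) * Y11))
        + (Y11 / Y12) * ((u - η) * Y22 + (φc u - φc η) * Y12)|
      ≤ |f₁ (X u) - f₁ (X η) - ((u - η) * Y21 + (φc u - φc η) * Y11)|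
        + |(Y11 / Y12) * ((u - η) * Y22 + (φc u - φc η) * Y12)| := abs_add_le _ _
    _ ≤ ε * d u + (|Y11| / Y) * (ε * d u) := add_le_add hr1 habs2
    _ = M * (ε * d u) := by rw [hMd]; ring
    _ ≤ M * (ε * (A * |u - η|)) := by
        apply mul_le_mul_of_nonneg_left ?_ hM0.le
        exact mul_le_mul_of_nonneg_left hdA hε.le
    _ = (M * A * ε) * |u - η| := by ring
    _ ≤ c * |u - η| := mul_le_mul_of_nonneg_right hMAε (abs_nonneg _)
    _ = c * ‖u - η‖ := by rw [Real.norm_eq_abs]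


/-- **Chain rule (Theorem 3.3).** Under the intrinsic graph setup, identify `N` with `ℝ²`
via `(η, t) ↦ η b₂ + t e₃`. Let `I`, `J` be open intervals with `I × J ⊆ B^N_{n₀,s}` and
`[a, b] ⊆ I`, and let `τ ∈ C¹([a,b], J)` be a characteristic of the Burgers equation
`∂_η φ₂ + det C ∂_t (φ₂²) = −(Y₂f₂ ∘ Φ₂)/(Y₁f₂ ∘ Φ₂)`, i.e.
`τ̇ η = 2 det C · φ₂ (η, τ η)`. Set `γ η = η b₂ + τ(η) e₃ = (η, τ η)`. Then
`f₁ ∘ Φ₂ ∘ γ` is differentiable at every `η ∈ [a,b]`, with derivative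
`−(1 / Y₁f₂(Φ₂(γ η))) · det [[Y₁f₁(Φ₂(γ η)), Y₂f₁(Φ₂(γ η))], [Y₁f₂(Φ₂(γ η)), Y₂f₂(Φ₂(γ η))]]`. -/
theorem chain_rule_along_characteristics
    (Ω : Set Hei) (hΩ : IsOpen Ω)
    (f₁ f₂ : Hei → ℝ) (gradf₁ gradf₂ : Hei → Hei →L[ℝ] ℝ)
    (hf₁ : C1H Ω f₁ gradf₁) (hf₂ : C1H Ω f₂ gradf₂)
    (c11 c12 c21 c22 : ℝ)
    (hb1 : c11 ^ 2 + c12 ^ 2 = 1) (hb2 : c21 ^ 2 + c22 ^ 2 = 1)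
    (detC : ℝ) (hdetC : detC = c11 * c22 - c12 * c21) (hdet : detC ≠ 0)
    (x₀ : Hei) (hx₀ : x₀ ∈ Ω)
    (hsurj : Function.Surjective (fun z : Hei => (gradf₁ x₀ z, gradf₂ x₀ z)))
    (hY1x₀ : gradf₂ x₀ (b1v c11 c12) ≠ 0)
    (n₀ : ℝ × ℝ) (r₀ : ℝ) (hfact : hmul (Nemb c21 c22 n₀) (r₀ • b1v c11 c12) = x₀)
    (s : ℝ) (hs : 0 < s)
    (φ₂ : ℝ × ℝ → ℝ)
    (ballN : Set (ℝ × ℝ))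
    (hball : ballN = {p : ℝ × ℝ | hdist (Nemb c21 c22 n₀) (Nemb c21 c22 p) < s})
    (hφcont : ContinuousOn φ₂ ballN)
    (hmaps : ∀ p ∈ ballN, intrinsicGraph c11 c12 c21 c22 φ₂ p ∈ Ω)
    (hΦ₀ : intrinsicGraph c11 c12 c21 c22 φ₂ n₀ = x₀)
    (hlevel : ∀ p ∈ ballN, f₂ (intrinsicGraph c11 c12 c21 c22 φ₂ p) = f₂ x₀)
    (hY1 : ∀ p ∈ ballN, gradf₂ (intrinsicGraph c11 c12 c21 c22 φ₂ p) (b1v c11 c12) ≠ 0)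
    (I J : Set ℝ) (hIo : IsOpen I) (hIc : I.OrdConnected) (hJo : IsOpen J)
    (hJc : J.OrdConnected) (hIJ : I ×ˢ J ⊆ ballN)
    (a b : ℝ) (hab : a < b) (habI : Set.Icc a b ⊆ I)
    (τ : ℝ → ℝ) (hτC1 : ContDiffOn ℝ 1 τ (Set.Icc a b))
    (hτJ : Set.MapsTo τ (Set.Icc a b) J)
    (hchar : ∀ η ∈ Set.Icc a b,
      HasDerivWithinAt τ (2 * detC * φ₂ (η, τ η)) (Set.Icc a b) η) :
    ∀ η ∈ Set.Icc a b,
      HasDerivWithinAt (fun y : ℝ => f₁ (intrinsicGraph c11 c12 c21 c22 φ₂ (y, τ y)))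
        (-(1 / gradf₂ (intrinsicGraph c11 c12 c21 c22 φ₂ (η, τ η)) (b1v c11 c12)) *
          (gradf₁ (intrinsicGraph c11 c12 c21 c22 φ₂ (η, τ η)) (b1v c11 c12) *
              gradf₂ (intrinsicGraph c11 c12 c21 c22 φ₂ (η, τ η)) (b2v c21 c22)
            - gradf₁ (intrinsicGraph c11 c12 c21 c22 φ₂ (η, τ η)) (b2v c21 c22) *
              gradf₂ (intrinsicGraph c11 c12 c21 c22 φ₂ (η, τ η)) (b1v c11 c12)))
        (Set.Icc a b) η := by
  intro η hη
  have hcurve : ∀ u ∈ Set.Icc a b, (u, τ u) ∈ ballN := fun u hu => hIJ ⟨habI hu, hτJ hu⟩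
  have hτcont : ContinuousOn τ (Set.Icc a b) := fun u hu => (hchar u hu).continuousWithinAt
  have hφcont' : ContinuousOn (fun u : ℝ => φ₂ (u, τ u)) (Set.Icc a b) :=
    hφcont.comp (continuousOn_id.prodMk hτcont) (fun u hu => hcurve u hu)
  have hpΩ : intrinsicGraph c11 c12 c21 c22 φ₂ (η, τ η) ∈ Ω := hmaps _ (hcurve η hη)
  obtain ⟨hdiff1, -⟩ := hf₁
  obtain ⟨hdiff2, -⟩ := hf₂
  obtain ⟨hhom1, hrem1⟩ := hdiff1 _ hpΩ
  obtain ⟨hhom2, hrem2⟩ := hdiff2 _ hpΩ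
  have hXw : ∀ u : ℝ, hmul (hinv (intrinsicGraph c11 c12 c21 c22 φ₂ (η, τ η)))
      (intrinsicGraph c11 c12 c21 c22 φ₂ (u, τ u)) =
      ((u - η) * c21 + (φ₂ (u, τ u) - φ₂ (η, τ η)) * c11,
       (u - η) * c22 + (φ₂ (u, τ u) - φ₂ (η, τ η)) * c12,
       τ u - τ η - detC * (φ₂ (η, τ η) + φ₂ (u, τ u)) * (u - η)) := by
    intro u
    rw [graph_diff]
    simp [hdetC]
  have hlevel' : ∀ u ∈ Set.Icc a b,
      f₂ (intrinsicGraph c11 c12 c21 c22 φ₂ (u, τ u))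
        = f₂ (intrinsicGraph c11 c12 c21 c22 φ₂ (η, τ η)) := by
    intro u hu
    rw [hlevel _ (hcurve u hu), hlevel _ (hcurve η hη)]
  exact key_lemma f₁ f₂ (gradf₁ (intrinsicGraph c11 c12 c21 c22 φ₂ (η, τ η)))
    (gradf₂ (intrinsicGraph c11 c12 c21 c22 φ₂ (η, τ η)))
    c11 c12 c21 c22 detC hb1 hb2 a b η hη τ (fun u => φ₂ (u, τ u))
    (fun u => intrinsicGraph c11 c12 c21 c22 φ₂ (u, τ u))
    hchar hφcont' hXw hlevel' hrem1 hrem2 hhom1 hhom2 (hY1 _ (hcurve η hη))
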